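/- arXiv:1606.09418 — 2 statements merged into one kernel-verified Lean document; each statement's English description precedes it below -/
import Mathlib

section
/- Let α₁, α₂ be real numbers with |α₁| ≤ 1, |α₂| ≤ 1 and α₁ + α₂ ≥ 0. Then α₁^r + α₂^r ≥ 0 for every positive integer r. -/
theorem stmt_7 (α₁ α₂ : ℝ) (h₁ : |α₁| ≤ 1) (h₂ : |α₂| ≤ 1) (hsum : 0 ≤ α₁ + α₂) :
    ∀ r : ℕ, 0 < r → 0 ≤ α₁ ^ r + α₂ ^ r := by
  intro r hr
  rcases le_or_gt 0 α₁ with ha | ha <;> rcases le_or_gt 0 α₂ with hb | hb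
  · positivity
  · have key : (-α₂) ^ r ≤ α₁ ^ r := pow_le_pow_left₀ (by linarith) (by linarith) r
    rcases Nat.even_or_odd r with he | ho
    · have h1 : 0 ≤ α₁ ^ r := pow_nonneg ha r
      have h2 : 0 ≤ α₂ ^ r := he.pow_nonneg α₂
      linarith
    · rw [ho.neg_pow] at key; linarith
  · have key : (-α₁) ^ r ≤ α₂ ^ r := pow_le_pow_left₀ (by linarith) (by linarith) r
    rcases Nat.even_or_odd r with he | ho
    · have h1 : 0 ≤ α₂ ^ r := pow_nonneg hb r
      have h2 : 0 ≤ α₁ ^ r := he.pow_nonneg α₁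
      linarith
    · rw [ho.neg_pow] at key; linarith
  · linarith
end

section
/- Let a : ℕ → ℂ satisfy |a(n)| = O(n^ε) for all ε > 0, with a(1) = 1 and a(m) ∈ ℂ ∖ ℝ_{≥0} for some m ≥ 2. Then for σ > 1 with ∑_n a(n) n^{-σ} ≠ 0, the function t ↦ (∑_n a(n) n^{-σ-it}) / (∑_n a(n) n^{-σ}) is not the characteristic function of any probability measure on ℝ. -/
open MeasureTheory Complex Filter Topology

lemma norm_exp_Itθ (t θ : ℝ) : ‖Complex.exp (I * t * θ)‖ = 1 := by
  rw [Complex.norm_exp]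
  have : (I * t * θ : ℂ).re = 0 := by simp
  rw [this, Real.exp_zero]

lemma avg_bound (T : ℝ) {f : ℝ → ℂ} {M : ℝ} (hM0 : 0 ≤ M) (hM : ∀ t, ‖f t‖ ≤ M) :
    ‖(1/(T:ℂ)) * ∫ t in (0:ℝ)..T, f t‖ ≤ M := by
  rcases eq_or_ne T 0 with rfl | hT
  · simp [hM0]
  · have h := intervalIntegral.norm_integral_le_of_norm_le_const (a := 0) (b := T) (C := M)
      (fun x _ => hM x)
    rw [norm_mul]
    have h1 : ‖(1:ℂ)/(T:ℂ)‖ = 1/|T| := by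
      rw [norm_div, norm_one, Complex.norm_real, Real.norm_eq_abs]
    rw [h1]
    calc 1/|T| * ‖∫ t in (0:ℝ)..T, f t‖ ≤ 1/|T| * (M * |T - 0|) :=
          mul_le_mul_of_nonneg_left h (by positivity)
      _ = M := by
          rw [sub_zero]
          have : |T| ≠ 0 := abs_ne_zero.mpr hT
          field_simp

lemma avg_exp (θ : ℝ) :
    Tendsto (fun T : ℝ => (1/(T:ℂ)) * ∫ t in (0:ℝ)..T, Complex.exp (I * t * θ))
      atTop (𝓝 (if θ = 0 then 1 else 0)) := by
  by_cases hθ : θ = 0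
  · simp only [hθ, if_pos rfl]
    apply Tendsto.congr' (f₁ := fun _ => (1:ℂ))
    · filter_upwards [eventually_gt_atTop (0:ℝ)] with T hT
      simp only [Complex.ofReal_zero, mul_zero, Complex.exp_zero]
      rw [intervalIntegral.integral_const]
      have : (T : ℂ) ≠ 0 := by exact_mod_cast hT.ne'
      simp [smul_eq_mul]
      field_simp
    · exact tendsto_const_nhds
  · simp only [if_neg hθ]
    have hc : (I * θ : ℂ) ≠ 0 := mul_ne_zero I_ne_zero (Complex.ofReal_ne_zero.mpr hθ)
    have key : ∀ T : ℝ, (∫ t in (0:ℝ)..T, Complex.exp (I * t * θ))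
        = (Complex.exp (I * θ * T) - 1) / (I * θ) := by
      intro T
      have : ∀ t : ℝ, Complex.exp (I * t * θ) = Complex.exp ((I * θ) * t) := by
        intro t; ring_nf
      simp_rw [this]
      rw [integral_exp_mul_complex hc]
      simp
    apply squeeze_zero_norm' (a := fun T => (1/T) * (2 / ‖(I * θ : ℂ)‖))
    · filter_upwards [eventually_gt_atTop (0:ℝ)] with T hT
      rw [key T, norm_mul]
      have h1 : ‖(1:ℂ)/(T:ℂ)‖ = 1/T := by
        rw [norm_div, norm_one, Complex.norm_real, Real.norm_of_nonneg hT.le]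
      rw [h1, norm_div]
      apply mul_le_mul_of_nonneg_left _ (by positivity)
      gcongr
      calc ‖Complex.exp (I * θ * T) - 1‖ ≤ ‖Complex.exp (I * θ * T)‖ + ‖(1:ℂ)‖ := norm_sub_le _ _
        _ ≤ 2 := by
            rw [norm_one]
            have h2 : ‖Complex.exp (I * θ * T)‖ = 1 := by
              have := norm_exp_Itθ T θ
              rw [show (I * (T:ℝ) * (θ:ℝ) : ℂ) = I * θ * T by ring] at this
              exact this
            rw [h2]; norm_num
    · have h0 : Tendsto (fun T : ℝ => (1/T)) atTop (𝓝 0) := by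
        simpa using tendsto_inv_atTop_zero (𝕜 := ℝ)
      simpa using h0.mul_const (2 / ‖(I * θ : ℂ)‖)

lemma avg_series (c : ℕ → ℂ) (hc : Summable fun n => ‖c n‖) (L : ℕ → ℝ)
    (hinj : Function.Injective L) (m : ℕ) :
    Tendsto (fun T : ℝ => (1/(T:ℂ)) *
        ∫ t in (0:ℝ)..T,
          (∑' n, c n * Complex.exp (-(I * t * L n))) * Complex.exp (I * t * L m))
      atTop (𝓝 (c m)) := by
  set F : ℝ → ℕ → ℂ := fun T n =>
    c n * ((1/(T:ℂ)) * ∫ t in (0:ℝ)..T, Complex.exp (I * t * ((L m - L n : ℝ) : ℂ))) with hF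
  have hFbound : ∀ T n, ‖F T n‖ ≤ ‖c n‖ := by
    intro T n
    rw [hF]
    simp only
    rw [norm_mul]
    calc ‖c n‖ * ‖(1/(T:ℂ)) * ∫ t in (0:ℝ)..T, Complex.exp (I * t * ((L m - L n : ℝ) : ℂ))‖
        ≤ ‖c n‖ * 1 := mul_le_mul_of_nonneg_left
          (avg_bound T zero_le_one (fun t => le_of_eq (norm_exp_Itθ t _))) (norm_nonneg _)
      _ = ‖c n‖ := mul_one _
  have hFsummable : ∀ T, Summable (F T) := fun T =>
    Summable.of_norm_bounded hc (hFbound T)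
  -- rewrite the function for T > 0
  have hswap : ∀ T : ℝ, 0 < T →
      (1/(T:ℂ)) * ∫ t in (0:ℝ)..T,
          (∑' n, c n * Complex.exp (-(I * t * L n))) * Complex.exp (I * t * L m)
      = ∑' n, F T n := by
    intro T hT
    have hpt : ∀ t : ℝ, (∑' n, c n * Complex.exp (-(I * t * L n))) * Complex.exp (I * t * L m)
        = ∑' n, c n * Complex.exp (I * t * ((L m - L n : ℝ) : ℂ)) := by
      intro t
      rw [← tsum_mul_right]
      congr 1; funext n
      rw [mul_assoc, ← Complex.exp_add]
      congr 1
      push_cast; ring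
    simp_rw [hpt]
    have hmeas : ∀ n : ℕ, Continuous fun t : ℝ =>
        c n * Complex.exp (I * t * ((L m - L n : ℝ) : ℂ)) := by
      intro n
      exact continuous_const.mul ((Complex.continuous_exp).comp (by continuity))
    rw [intervalIntegral.integral_of_le hT.le,
      ← MeasureTheory.integral_tsum_of_summable_integral_norm
        (fun n => ((hmeas n).integrableOn_Ioc))
        ?_, ← tsum_mul_left]
    · congr 1; funext n
      rw [MeasureTheory.integral_const_mul, hF]
      simp only
      rw [intervalIntegral.integral_of_le hT.le]
      ring
    · apply Summable.of_nonneg_of_le (fun n => integral_nonneg fun t => norm_nonneg _)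
        (fun n => ?_) (hc.mul_left T)
      have hn : ∀ t : ℝ, ‖c n * Complex.exp (I * t * ((L m - L n : ℝ) : ℂ))‖ = ‖c n‖ := by
        intro t; rw [norm_mul, norm_exp_Itθ, mul_one]
      simp_rw [hn]
      rw [MeasureTheory.integral_const]
      simp [Real.volume_Ioc, ENNReal.toReal_ofReal hT.le, mul_comm]
      rw [max_eq_left hT.le]; exact le_of_eq (mul_comm _ _)
  -- dominated convergence for the series
  have hab : ∀ n : ℕ, Tendsto (fun T => F T n) atTop
      (𝓝 (c n * (if (L m - L n : ℝ) = 0 then 1 else 0))) := by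
    intro n
    exact (avg_exp (L m - L n)).const_mul (c n)
  have key := tendsto_tsum_of_dominated_convergence (𝓕 := (atTop : Filter ℝ))
    (f := F) (g := fun n => c n * (if (L m - L n : ℝ) = 0 then 1 else 0))
    (bound := fun n => ‖c n‖) hc hab (Eventually.of_forall fun T n => hFbound T n)
  have hg : (∑' n, c n * (if (L m - L n : ℝ) = 0 then 1 else 0)) = c m := by
    have he : ∀ n, c n * (if (L m - L n : ℝ) = 0 then 1 else 0)
        = (if n = m then c m else 0) := by
      intro n
      by_cases h : n = m
      · subst h; simp
      · have : (L m - L n : ℝ) ≠ 0 := sub_ne_zero.mpr fun he => h (hinj he.symm)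
        simp [this, h]
    simp_rw [he]
    exact tsum_ite_eq m (fun _ => c m)
  rw [hg] at key
  apply key.congr'
  filter_upwards [eventually_gt_atTop (0:ℝ)] with T hT
  exact (hswap T hT).symm

lemma integral_exp_Itθ {θ : ℝ} (hθ : θ ≠ 0) (T : ℝ) :
    (∫ t in (0:ℝ)..T, Complex.exp (I * t * θ))
      = (Complex.exp (I * θ * T) - 1) / (I * θ) := by
  have hc : (I * θ : ℂ) ≠ 0 := mul_ne_zero I_ne_zero (Complex.ofReal_ne_zero.mpr hθ)
  have : ∀ t : ℝ, Complex.exp (I * t * θ) = Complex.exp ((I * θ) * t) := by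
    intro t; ring_nf
  simp_rw [this]
  rw [integral_exp_mul_complex hc]
  simp

lemma avg_measure (μ : Measure ℝ) [IsProbabilityMeasure μ] (L : ℝ) :
    Tendsto (fun T : ℝ => (1/(T:ℂ)) *
        ∫ t in (0:ℝ)..T, (∫ x, Complex.exp (I * t * x) ∂μ) * Complex.exp (I * t * L))
      atTop (𝓝 (((μ {-L}).toReal : ℂ))) := by
  set F : ℝ → ℝ → ℂ := fun T x =>
    (1/(T:ℂ)) * ∫ t in (0:ℝ)..T, Complex.exp (I * t * ((x + L : ℝ) : ℂ)) with hF
  -- Step 1 : Fubini, for T > 0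
  have hswap : ∀ T : ℝ, 0 < T →
      (1/(T:ℂ)) * ∫ t in (0:ℝ)..T, (∫ x, Complex.exp (I * t * x) ∂μ) * Complex.exp (I * t * L)
      = ∫ x, F T x ∂μ := by
    intro T hT
    have hpt : ∀ t : ℝ, (∫ x, Complex.exp (I * t * x) ∂μ) * Complex.exp (I * t * L)
        = ∫ x, Complex.exp (I * t * ((x + L : ℝ) : ℂ)) ∂μ := by
      intro t
      rw [← MeasureTheory.integral_mul_const]
      congr 1; funext x
      rw [← Complex.exp_add]
      congr 1
      push_cast; ring
    simp_rw [hpt]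
    haveI : IsFiniteMeasure (volume.restrict (Set.Ioc (0:ℝ) T)) :=
      ⟨by simp [Real.volume_Ioc]⟩
    have hcont : Continuous (Function.uncurry fun (t : ℝ) (x : ℝ) =>
        Complex.exp (I * t * ((x + L : ℝ) : ℂ))) := by
      apply Complex.continuous_exp.comp
      apply Continuous.mul
      · exact continuous_const.mul (Complex.continuous_ofReal.comp continuous_fst)
      · exact Complex.continuous_ofReal.comp ((continuous_snd).add continuous_const)
    have hint : Integrable (Function.uncurry fun (t : ℝ) (x : ℝ) =>
        Complex.exp (I * t * ((x + L : ℝ) : ℂ)))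
        ((volume.restrict (Set.Ioc (0:ℝ) T)).prod μ) := by
      apply MeasureTheory.Integrable.mono' (g := fun _ => (1:ℝ))
        (integrable_const 1) hcont.aestronglyMeasurable
      filter_upwards with p
      exact le_of_eq (norm_exp_Itθ p.1 (p.2 + L))
    rw [intervalIntegral.integral_of_le hT.le,
      MeasureTheory.integral_integral_swap hint, ← MeasureTheory.integral_const_mul]
    congr 1; funext x
    rw [hF]; simp only
    rw [intervalIntegral.integral_of_le hT.le]
  -- Step 2 : dominated convergence
  have hmeas : ∀ T : ℝ, 0 < T → AEStronglyMeasurable (F T) μ := by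
    intro T hT
    have hFeq : F T = fun x : ℝ => if (x + L : ℝ) = 0 then (1/(T:ℂ)) * (T:ℂ)
        else (1/(T:ℂ)) * ((Complex.exp (I * ((x + L : ℝ) : ℂ) * T) - 1) / (I * ((x + L : ℝ) : ℂ))) := by
      funext x
      by_cases h : (x + L : ℝ) = 0
      · rw [hF]; simp only [if_pos h, h]
        norm_num
      · rw [hF]; simp only [if_neg h]
        rw [integral_exp_Itθ h]
    rw [hFeq]
    apply Measurable.aestronglyMeasurable
    apply Measurable.ite
    · have : {x : ℝ | x + L = 0} = {-L} := by
        ext x; simp [eq_neg_iff_add_eq_zero]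
      exact this ▸ measurableSet_singleton (-L)
    · exact measurable_const
    · apply Measurable.const_mul
      apply Measurable.div
      · fun_prop
      · fun_prop
  have hlim := MeasureTheory.tendsto_integral_filter_of_dominated_convergence
    (μ := μ) (l := (atTop : Filter ℝ)) (F := F)
    (f := fun x : ℝ => if (x + L : ℝ) = 0 then (1:ℂ) else 0)
    (bound := fun _ => (1:ℝ))
    (by filter_upwards [eventually_gt_atTop (0:ℝ)] with T hT; exact hmeas T hT)
    (by
      filter_upwards [eventually_gt_atTop (0:ℝ)] with T hT
      filter_upwards with x
      exact avg_bound T zero_le_one (fun t => le_of_eq (norm_exp_Itθ t _)))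
    (integrable_const 1)
    (by
      filter_upwards with x
      exact avg_exp (x + L))
  have hval : (∫ x : ℝ, (if (x + L : ℝ) = 0 then (1:ℂ) else 0) ∂μ) = ((μ {-L}).toReal : ℂ) := by
    have : (fun x : ℝ => if (x + L : ℝ) = 0 then (1:ℂ) else 0)
        = Set.indicator {-L} (fun _ => (1:ℂ)) := by
      funext x
      rw [Set.indicator_apply]
      congr 1
      simp [Set.mem_singleton_iff, eq_neg_iff_add_eq_zero]
    rw [this, MeasureTheory.integral_indicator_const (1:ℂ) (measurableSet_singleton (-L))]
    rw [Complex.real_smul, mul_one]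
    rfl
  rw [hval] at hlim
  apply hlim.congr'
  filter_upwards [eventually_gt_atTop (0:ℝ)] with T hT
  exact (hswap T hT).symm

theorem stmt_15 (a : ℕ → ℂ)
    (ha_growth : ∀ ε : ℝ, 0 < ε → ∃ C : ℝ, 0 < C ∧
      ∀ n : ℕ, 1 ≤ n → ‖a n‖ ≤ C * (n : ℝ) ^ ε)
    (ha1 : a 1 = 1)
    (hm : ∃ m : ℕ, 2 ≤ m ∧ ¬ ∃ x : ℝ, 0 ≤ x ∧ a m = (x : ℂ))
    (σ : ℝ) (hσ : 1 < σ)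
    (hD : (∑' n : ℕ, a (n + 1) * ((n + 1 : ℕ) : ℂ) ^ (-(σ : ℂ))) ≠ 0) :
    ¬ ∃ μ : Measure ℝ, IsProbabilityMeasure μ ∧
      ∀ t : ℝ, (∫ x, Complex.exp (I * t * x) ∂μ)
        = (∑' n : ℕ, a (n + 1) * ((n + 1 : ℕ) : ℂ) ^ (-((σ : ℂ) + t * I)))
          / (∑' n : ℕ, a (n + 1) * ((n + 1 : ℕ) : ℂ) ^ (-(σ : ℂ))) := by
  rintro ⟨μ, hμprob, hφ⟩
  obtain ⟨m, hm2, hmx⟩ := hm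
  set b : ℕ → ℂ := fun n => a (n + 1) * ((n + 1 : ℕ) : ℂ) ^ (-(σ : ℂ)) with hb
  set D : ℂ := tsum b with hDdef
  -- summability
  have hε : (0:ℝ) < (σ - 1)/2 := by linarith
  obtain ⟨C, hC, hCb⟩ := ha_growth ((σ - 1)/2) hε
  have hnorm_cpow : ∀ n : ℕ, ‖(((n + 1 : ℕ)) : ℂ) ^ (-(σ : ℂ))‖ = ((n : ℝ) + 1) ^ (-σ) := by
    intro n
    have hpos : (0:ℝ) < ((n + 1 : ℕ) : ℝ) := by positivity
    rw [show (((n + 1 : ℕ)) : ℂ) = ((((n + 1 : ℕ) : ℝ)) : ℂ) by push_cast; ring,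
      Complex.norm_cpow_eq_rpow_re_of_pos hpos]
    norm_num
  have hsum : Summable fun n => ‖b n‖ := by
    have hsum0 : Summable fun n : ℕ => C * ((n : ℝ) + 1) ^ ((σ - 1)/2 - σ) := by
      apply Summable.mul_left
      have := Real.summable_nat_rpow (p := (σ - 1)/2 - σ) |>.mpr (by linarith)
      have h2 := (summable_nat_add_iff (f := fun n : ℕ => (n : ℝ) ^ ((σ - 1)/2 - σ)) 1).mpr this
      apply h2.congr
      intro n
      push_cast
      ring_nf
    apply Summable.of_nonneg_of_le (fun n => norm_nonneg _) (fun n => ?_) hsum0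
    rw [hb]; simp only
    rw [norm_mul, hnorm_cpow n]
    have h1 : ‖a (n + 1)‖ ≤ C * ((n + 1 : ℕ) : ℝ) ^ ((σ - 1)/2) :=
      hCb (n + 1) (by omega)
    have h2 : ‖a (n + 1)‖ ≤ C * ((n : ℝ) + 1) ^ ((σ - 1)/2) := by
      convert h1 using 3
      push_cast; ring
    calc ‖a (n + 1)‖ * ((n : ℝ) + 1) ^ (-σ)
        ≤ (C * ((n : ℝ) + 1) ^ ((σ - 1)/2)) * ((n : ℝ) + 1) ^ (-σ) := by
          apply mul_le_mul_of_nonneg_right h2 (Real.rpow_nonneg (by positivity) _)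
      _ = C * ((n : ℝ) + 1) ^ ((σ - 1)/2 - σ) := by
          rw [mul_assoc, ← Real.rpow_add (by positivity)]
          ring_nf
  -- the coefficients
  set c : ℕ → ℂ := fun n => b n / D with hc
  have hcsum : Summable fun n => ‖c n‖ := by
    rw [hc]; simp only [norm_div]
    exact hsum.div_const _
  set L : ℕ → ℝ := fun n => Real.log ((n : ℝ) + 1) with hLdef
  have hLinj : Function.Injective L := by
    intro i j h
    have hi : (0:ℝ) < (i : ℝ) + 1 := by positivity
    have hj : (0:ℝ) < (j : ℝ) + 1 := by positivity
    have he := congrArg Real.exp h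
    rw [hLdef] at he; simp only at he
    rw [Real.exp_log hi, Real.exp_log hj] at he
    have : (i : ℝ) = j := by linarith
    exact_mod_cast this
  -- rewrite of the Dirichlet series as a trigonometric series
  have hL0 : ∀ n : ℕ, ((n + 1 : ℕ) : ℂ) ≠ 0 := fun n => by
    exact_mod_cast Nat.succ_ne_zero n
  have hlog : ∀ n : ℕ, Complex.log ((n + 1 : ℕ) : ℂ) = ((L n : ℝ) : ℂ) := by
    intro n
    rw [hLdef]; simp only
    have hcast : ((n + 1 : ℕ) : ℂ) = Complex.ofReal ((n:ℝ)+1) := by push_cast; ring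
    rw [hcast]
    exact (Complex.ofReal_log (by positivity)).symm
  have hterm : ∀ (t : ℝ) (n : ℕ), a (n + 1) * ((n + 1 : ℕ) : ℂ) ^ (-((σ : ℂ) + t * I))
      = b n * Complex.exp (-(I * t * (L n : ℝ))) := by
    intro t n
    rw [hb]; simp only
    rw [show (-((σ : ℂ) + t * I)) = (-(σ : ℂ)) + (-((t : ℂ) * I)) by ring,
      Complex.cpow_add _ _ (hL0 n), ← mul_assoc]
    congr 1
    rw [Complex.cpow_def_of_ne_zero (hL0 n), hlog n]
    congr 1
    ring
  have hchar : ∀ t : ℝ, (∫ x, Complex.exp (I * t * x) ∂μ)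
      = ∑' n, c n * Complex.exp (-(I * t * (L n : ℝ))) := by
    intro t
    rw [hφ t, show (∑' n : ℕ, a (n + 1) * ((n + 1 : ℕ) : ℂ) ^ (-((σ : ℂ) + t * I)))
        = ∑' n, b n * Complex.exp (-(I * t * (L n : ℝ))) from tsum_congr fun n => hterm t n]
    rw [← tsum_div_const]
    exact tsum_congr fun n => by rw [hc]; simp only; rw [div_mul_eq_mul_div]
  -- the two limits agree
  have hmain : ∀ k : ℕ, c k = (((μ {-(L k)}).toReal : ℝ) : ℂ) := by
    intro k
    have h1 := avg_series c hcsum L hLinj k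
    have h2 := avg_measure μ (L k)
    have h2' : Tendsto (fun T : ℝ => (1/(T:ℂ)) *
        ∫ t in (0:ℝ)..T,
          (∑' n, c n * Complex.exp (-(I * t * L n))) * Complex.exp (I * t * L k))
        atTop (𝓝 (((μ {-(L k)}).toReal : ℂ))) := by
      apply h2.congr
      intro T
      congr 1
      apply intervalIntegral.integral_congr
      intro t _
      simp only
      rw [hchar t]
    exact tendsto_nhds_unique h1 h2'
  -- evaluate at k = 0
  have hr0 : c 0 = (((μ {(0:ℝ)}).toReal : ℝ) : ℂ) := by
    have := hmain 0
    rw [show -(L 0) = (0:ℝ) by rw [hLdef]; simp] at this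
    exact this
  set r0 : ℝ := (μ {(0:ℝ)}).toReal with hr0def
  have hc0 : c 0 = 1 / D := by
    rw [hc, hb]; simp only
    norm_num [ha1]
  have hr0pos : 0 < r0 := by
    rcases lt_or_eq_of_le (ENNReal.toReal_nonneg : (0:ℝ) ≤ r0) with h | h
    · exact h
    · exfalso
      apply one_div_ne_zero hD
      rw [← hc0, hr0, hr0def, ← h]
      norm_num
  have hDval : D = ((r0 : ℂ))⁻¹ := by
    have h1 : 1 / D = (r0 : ℂ) := by rw [← hc0, hr0]
    rw [one_div] at h1
    rw [← h1, inv_inv]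
  -- evaluate at k = m - 1
  set k : ℕ := m - 1 with hkdef
  have hk1 : k + 1 = m := by omega
  set r : ℝ := (μ {-(L k)}).toReal with hrdef
  have hrnn : 0 ≤ r := ENNReal.toReal_nonneg
  have hck : c k = (r : ℂ) := hmain k
  have hbk : b k = a m * ((m : ℕ) : ℂ) ^ (-(σ : ℂ)) := by
    rw [hb]; simp only
    rw [hk1]
  have hmpos : (0:ℝ) < (m : ℝ) := by
    have : 0 < m := by omega
    exact_mod_cast this
  have hmc : ((m : ℝ) : ℂ) ^ (-(σ : ℂ)) = (((m : ℝ) ^ (-σ) : ℝ) : ℂ) := by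
    rw [Complex.ofReal_cpow hmpos.le]
    congr 1
    push_cast; ring
  have hmr_pos : (0:ℝ) < (m : ℝ) ^ (-σ) := Real.rpow_pos_of_pos hmpos _
  have hmr_ne : (((m : ℝ) ^ (-σ) : ℝ) : ℂ) ≠ 0 := by
    exact_mod_cast ne_of_gt hmr_pos
  have hbk' : b k = a m * (((m : ℝ) ^ (-σ) : ℝ) : ℂ) := by
    rw [hbk, ← hmc]
    norm_cast
  have heq : a m * (((m : ℝ) ^ (-σ) : ℝ) : ℂ) = (r : ℂ) * ((r0 : ℂ))⁻¹ := by
    have h3 := hck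
    rw [hc] at h3; simp only at h3
    rw [hbk'] at h3
    rw [div_eq_iff hD] at h3
    rw [h3, hDval]
  apply hmx
  refine ⟨r / r0 * (m : ℝ) ^ σ, ?_, ?_⟩
  · exact mul_nonneg (div_nonneg hrnn hr0pos.le) (Real.rpow_pos_of_pos hmpos σ).le
  · have h2 : a m = (r : ℂ) * ((r0 : ℂ))⁻¹ / (((m : ℝ) ^ (-σ) : ℝ) : ℂ) := by
      rw [eq_div_iff hmr_ne]; exact heq
    rw [h2, Real.rpow_neg hmpos.le]
    have hσpos : ((m : ℝ) ^ σ : ℝ) ≠ 0 := ne_of_gt (Real.rpow_pos_of_pos hmpos σ)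
    have hr0ne : (r0 : ℂ) ≠ 0 := by exact_mod_cast hr0pos.ne'
    push_cast
    field_simp
end
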